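/- Let A, B : ℝ^m → O(m) be maps into the orthogonal group such that A(q) = I and B(q) = I whenever ‖q‖ < 0.1 or ‖q‖ > 0.6. Then the Milnor–Munkres commutator μ = Ψ_B⁻¹ ∘ Φ_A⁻¹ ∘ Ψ_B ∘ Φ_A is supported in the spherical shell {0.1 ≤ ‖(x,y)‖ ≤ 0.9}: μ(x,y) = (x,y) whenever ‖(x,y)‖ < 0.1 or ‖(x,y)‖ > 0.9. -/

import Mathlib

open Matrix

/-- `Φ_A (x, y) = (x, A(x) y)` for a map `A : ℝ^m → O(m)`. -/
noncomputable def PhiMap (m : ℕ)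
    (A : EuclideanSpace ℝ (Fin m) → Matrix.orthogonalGroup (Fin m) ℝ) :
    (EuclideanSpace ℝ (Fin m) × EuclideanSpace ℝ (Fin m)) →
      (EuclideanSpace ℝ (Fin m) × EuclideanSpace ℝ (Fin m)) :=
  fun p => (p.1, WithLp.toLp 2 ((A p.1 : Matrix (Fin m) (Fin m) ℝ).mulVec p.2))

/-- `Ψ_B (x, y) = (B(y) x, y)` for a map `B : ℝ^m → O(m)`. -/
noncomputable def PsiMap (m : ℕ)
    (B : EuclideanSpace ℝ (Fin m) → Matrix.orthogonalGroup (Fin m) ℝ) :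
    (EuclideanSpace ℝ (Fin m) × EuclideanSpace ℝ (Fin m)) →
      (EuclideanSpace ℝ (Fin m) × EuclideanSpace ℝ (Fin m)) :=
  fun p => (WithLp.toLp 2 ((B p.2 : Matrix (Fin m) (Fin m) ℝ).mulVec p.1), p.2)

/-- The inverse `Φ_A⁻¹ (x, y) = (x, A(x)⁻¹ y)` of `Φ_A`. -/
noncomputable def PhiMapInv (m : ℕ)
    (A : EuclideanSpace ℝ (Fin m) → Matrix.orthogonalGroup (Fin m) ℝ) :
    (EuclideanSpace ℝ (Fin m) × EuclideanSpace ℝ (Fin m)) →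
      (EuclideanSpace ℝ (Fin m) × EuclideanSpace ℝ (Fin m)) :=
  fun p => (p.1, WithLp.toLp 2 (((A p.1)⁻¹ : Matrix (Fin m) (Fin m) ℝ).mulVec p.2))

/-- The inverse `Ψ_B⁻¹ (x, y) = (B(y)⁻¹ x, y)` of `Ψ_B`. -/
noncomputable def PsiMapInv (m : ℕ)
    (B : EuclideanSpace ℝ (Fin m) → Matrix.orthogonalGroup (Fin m) ℝ) :
    (EuclideanSpace ℝ (Fin m) × EuclideanSpace ℝ (Fin m)) →
      (EuclideanSpace ℝ (Fin m) × EuclideanSpace ℝ (Fin m)) :=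
  fun p => (WithLp.toLp 2 (((B p.2)⁻¹ : Matrix (Fin m) (Fin m) ℝ).mulVec p.1), p.2)

/-- The Milnor–Munkres commutator `μ = Ψ_B⁻¹ ∘ Φ_A⁻¹ ∘ Ψ_B ∘ Φ_A`. -/
noncomputable def mmCommutator (m : ℕ)
    (A B : EuclideanSpace ℝ (Fin m) → Matrix.orthogonalGroup (Fin m) ℝ) :
    (EuclideanSpace ℝ (Fin m) × EuclideanSpace ℝ (Fin m)) →
      (EuclideanSpace ℝ (Fin m) × EuclideanSpace ℝ (Fin m)) :=
  PsiMapInv m B ∘ PhiMapInv m A ∘ PsiMap m B ∘ PhiMap m A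

/-- The norm of `(x, y) ∈ ℝ^m × ℝ^m` given by `(‖x‖² + ‖y‖²)^{1/2}`, i.e. the
`ℓ²`-product norm. -/
noncomputable def prodL2Norm (m : ℕ)
    (p : EuclideanSpace ℝ (Fin m) × EuclideanSpace ℝ (Fin m)) : ℝ :=
  ‖(WithLp.equiv 2 (EuclideanSpace ℝ (Fin m) × EuclideanSpace ℝ (Fin m))).symm p‖

/-- If `A(q) = I` and `B(q) = I` whenever `‖q‖ < 0.1` or `‖q‖ > 0.6`, then the
Milnor–Munkres commutator `μ = Ψ_B⁻¹ ∘ Φ_A⁻¹ ∘ Ψ_B ∘ Φ_A` is supported in the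
spherical shell `{0.1 ≤ ‖(x,y)‖ ≤ 0.9}`: `μ(x,y) = (x,y)` whenever
`‖(x,y)‖ < 0.1` or `‖(x,y)‖ > 0.9`. -/

lemma ortho_norm_mulVec' {m : ℕ} (U : Matrix.orthogonalGroup (Fin m) ℝ)
    (v w : EuclideanSpace ℝ (Fin m)) (hw : w = (U : Matrix (Fin m) (Fin m) ℝ).mulVec v) :
    ‖w‖ = ‖v‖ := by
  have hU : (U : Matrix (Fin m) (Fin m) ℝ)ᵀ * (U : Matrix (Fin m) (Fin m) ℝ) = 1 := by
    have := U.2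
    rw [Matrix.mem_orthogonalGroup_iff'] at this
    simpa [Matrix.star_eq_conjTranspose] using this
  have key : ∀ u : EuclideanSpace ℝ (Fin m), ‖u‖ ^ 2 = u ⬝ᵥ u := by
    intro u
    rw [← real_inner_self_eq_norm_sq]
    simp only [PiLp.inner_apply, dotProduct, RCLike.inner_apply, conj_trivial, mul_comm]
  have hdot : w ⬝ᵥ w = v ⬝ᵥ v := by
    rw [hw]
    calc ((U : Matrix (Fin m) (Fin m) ℝ) *ᵥ v) ⬝ᵥ ((U : Matrix (Fin m) (Fin m) ℝ) *ᵥ v)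
        = ((U : Matrix (Fin m) (Fin m) ℝ) *ᵥ v) ᵥ* (U : Matrix (Fin m) (Fin m) ℝ) ⬝ᵥ v :=
          Matrix.dotProduct_mulVec _ _ _
      _ = ((U : Matrix (Fin m) (Fin m) ℝ)ᵀ * (U : Matrix (Fin m) (Fin m) ℝ)) *ᵥ v ⬝ᵥ v := by
          rw [← Matrix.mulVec_transpose, Matrix.mulVec_mulVec]
      _ = v ⬝ᵥ v := by rw [hU, Matrix.one_mulVec]
  have h2 : ‖w‖ ^ 2 = ‖v‖ ^ 2 := (key w).trans (hdot.trans (key v).symm)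
  nlinarith [norm_nonneg v, norm_nonneg w]

lemma ortho_inv_mulVec_cancel {m : ℕ} (g : Matrix.orthogonalGroup (Fin m) ℝ)
    (x : EuclideanSpace ℝ (Fin m)) :
    ((g : Matrix (Fin m) (Fin m) ℝ))⁻¹.mulVec
      ((g : Matrix (Fin m) (Fin m) ℝ).mulVec x) = x := by
  have hinv : ((g : Matrix (Fin m) (Fin m) ℝ))⁻¹ = star (g : Matrix (Fin m) (Fin m) ℝ) :=
    Matrix.inv_eq_left_inv (Unitary.coe_star_mul_self g)
  rw [Matrix.mulVec_mulVec, hinv, Unitary.coe_star_mul_self g, Matrix.one_mulVec]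

theorem statement6 (m : ℕ)
    (A B : EuclideanSpace ℝ (Fin m) → Matrix.orthogonalGroup (Fin m) ℝ)
    (hA : ∀ q : EuclideanSpace ℝ (Fin m), ‖q‖ < 0.1 ∨ 0.6 < ‖q‖ → A q = 1)
    (hB : ∀ q : EuclideanSpace ℝ (Fin m), ‖q‖ < 0.1 ∨ 0.6 < ‖q‖ → B q = 1)
    (p : EuclideanSpace ℝ (Fin m) × EuclideanSpace ℝ (Fin m))
    (hp : prodL2Norm m p < 0.1 ∨ 0.9 < prodL2Norm m p) :
    mmCommutator m A B p = p := by
  have hsq : prodL2Norm m p ^ 2 = ‖p.1‖ ^ 2 + ‖p.2‖ ^ 2 := by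
    simpa [prodL2Norm] using
      WithLp.prod_norm_sq_eq_of_L2
        ((WithLp.equiv 2 (EuclideanSpace ℝ (Fin m) × EuclideanSpace ℝ (Fin m))).symm p)
  have hnn : (0:ℝ) ≤ prodL2Norm m p := norm_nonneg _
  obtain ⟨x, y⟩ := p
  simp only at hsq ⊢
  rcases hp with h | h
  · have hx : ‖x‖ < 0.1 := by nlinarith [norm_nonneg x, norm_nonneg y]
    have hy : ‖y‖ < 0.1 := by nlinarith [norm_nonneg x, norm_nonneg y]
    have hA1 := hA x (Or.inl hx)
    have hB1 := hB y (Or.inl hy)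
    simp [mmCommutator, PhiMap, PsiMap, PhiMapInv, PsiMapInv, hA1, hB1,
      Matrix.one_mulVec]
  · by_cases hx : 0.6 < ‖x‖
    · have hA1 := hA x (Or.inr hx)
      set x' : EuclideanSpace ℝ (Fin m) := WithLp.toLp 2 ((B y : Matrix (Fin m) (Fin m) ℝ).mulVec x) with hx'
      have hnx' : ‖x'‖ = ‖x‖ := ortho_norm_mulVec' (B y) x x' (by rw [hx'])
      have hA2 := hA x' (Or.inr (hnx' ▸ hx))
      simp only [mmCommutator, Function.comp_apply, PhiMap, PsiMap, PhiMapInv, PsiMapInv,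
        hA1, hA2]
      simp only [← hx', hA1, hA2, OneMemClass.coe_one, inv_one, Matrix.one_mulVec,
        Prod.mk.injEq, and_true]
      simp only [WithLp.toLp_ofLp, ortho_inv_mulVec_cancel]
    · have hy : 0.6 < ‖y‖ := by nlinarith [norm_nonneg x, norm_nonneg y]
      have hB1 := hB y (Or.inr hy)
      set y' : EuclideanSpace ℝ (Fin m) := WithLp.toLp 2 ((A x : Matrix (Fin m) (Fin m) ℝ).mulVec y) with hy'
      have hny' : ‖y'‖ = ‖y‖ := ortho_norm_mulVec' (A x) y y' (by rw [hy'])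
      have hB2 := hB y' (Or.inr (hny' ▸ hy))
      have hy2 : ((A x : Matrix (Fin m) (Fin m) ℝ))⁻¹ *ᵥ y' = y := by
        rw [hy']; exact ortho_inv_mulVec_cancel (A x) y
      simp only [mmCommutator, Function.comp_apply, PhiMap, PsiMap, PhiMapInv, PsiMapInv,
        hB1, OneMemClass.coe_one, Matrix.one_mulVec, ← hy', hB2, hy2, inv_one,
        Prod.mk.injEq]
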